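/- Let m ≡ 0 (mod 4) with m ≥ 4, n = 2^m − 1, and v = 2^{(m−2)/2} − 1. Then gcd(v, n) = 1, and for every integer a with 1 ≤ a ≤ 2^{(m−2)/2}, the binary weight of a·v equals (m−2)/2. -/
import Mathlib


def w2 (x : ℕ) : ℕ := (Nat.digits 2 x).sum

lemma w2_rec (x : ℕ) : w2 x = x % 2 + w2 (x / 2) := by
  rcases Nat.eq_zero_or_pos x with h | h
  · simp [h, w2]
  · unfold w2
    rw [Nat.digits_def' (by norm_num) h]
    simp

lemma w2_split : ∀ k b c : ℕ, c < 2 ^ k → w2 (b * 2 ^ k + c) = w2 b + w2 c := by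
  intro k
  induction k with
  | zero => intro b c hc; interval_cases c ; simp [w2]
  | succ k ih =>
    intro b c hc
    rw [w2_rec (b * 2 ^ (k+1) + c), w2_rec c]
    have h2 : (2:ℕ) ^ (k+1) = 2 * 2 ^ k := by ring
    set B := b * 2 ^ k with hB
    have e1 : b * 2 ^ (k+1) + c = 2 * B + c := by rw [h2, hB]; ring
    have e2 : (2 * B + c) % 2 = c % 2 := by omega
    have e3 : (2 * B + c) / 2 = B + c / 2 := by omega
    rw [e1, e2, e3, hB]
    rw [ih b (c / 2) (by rw [h2] at hc; omega)]
    ring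

lemma w2_compl : ∀ k x : ℕ, x < 2 ^ k → w2 x + w2 (2 ^ k - 1 - x) = k := by
  intro k
  induction k with
  | zero => intro x hx; interval_cases x; simp [w2]
  | succ k ih =>
    intro x hx
    rw [w2_rec x, w2_rec (2 ^ (k+1) - 1 - x)]
    have h2 : (2:ℕ) ^ (k+1) = 2 * 2 ^ k := by ring
    have hB : (1:ℕ) ≤ 2 ^ k := Nat.one_le_two_pow
    set B := (2:ℕ) ^ k with hBdef
    rw [h2] at hx ⊢
    have e1 : (2 * B - 1 - x) % 2 = 1 - x % 2 := by omega
    have e2 : (2 * B - 1 - x) / 2 = B - 1 - x / 2 := by omega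
    rw [e1, e2]
    have := ih (x / 2) (by omega)
    omega

lemma mersenne_mod (a b : ℕ) (ha : 0 < a) :
    (2 ^ b - 1) % (2 ^ a - 1) = 2 ^ (b % a) - 1 := by
  have hq : b = a * (b / a) + b % a := (Nat.div_add_mod b a).symm
  have hd : (2 ^ a - 1) ∣ (2 ^ (a * (b / a)) - 1) := by
    have := Nat.sub_dvd_pow_sub_pow (2 ^ a) 1 (b / a)
    simpa [← pow_mul] using this
  obtain ⟨t, ht⟩ := hd
  have hlt : 2 ^ (b % a) - 1 < 2 ^ a - 1 := by
    have : 2 ^ (b % a) < 2 ^ a := Nat.pow_lt_pow_right (by norm_num) (Nat.mod_lt _ ha)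
    have h1 : (1:ℕ) ≤ 2 ^ (b % a) := Nat.one_le_two_pow
    omega
  have key : 2 ^ b - 1 = (2 ^ a - 1) * t * 2 ^ (b % a) + (2 ^ (b % a) - 1) := by
    have h1 : (1:ℕ) ≤ 2 ^ (a * (b / a)) := Nat.one_le_two_pow
    have h2 : (1:ℕ) ≤ 2 ^ (b % a) := Nat.one_le_two_pow
    have hb : (2:ℕ) ^ b = 2 ^ (a * (b / a)) * 2 ^ (b % a) := by
      rw [← pow_add, ← hq]
    have h3 : 2 ^ (b % a) ≤ 2 ^ (a * (b / a)) * 2 ^ (b % a) :=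
      Nat.le_mul_of_pos_left _ (by positivity)
    rw [hb, ← ht]
    rw [Nat.sub_mul]
    omega
  rw [key, mul_assoc, Nat.mul_add_mod, Nat.mod_eq_of_lt hlt]

lemma mersenne_gcd : ∀ a b : ℕ, Nat.gcd (2 ^ a - 1) (2 ^ b - 1) = 2 ^ (Nat.gcd a b) - 1 := by
  intro a
  induction a using Nat.strong_induction_on with
  | _ a ih =>
    intro b
    rcases Nat.eq_zero_or_pos a with h | h
    · simp [h]
    · rw [Nat.gcd_rec (2 ^ a - 1) (2 ^ b - 1), mersenne_mod a b h,
        ih (b % a) (Nat.mod_lt _ h) a, Nat.gcd_rec a b]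

theorem stmt8 (m : ℕ) (hm : m % 4 = 0) (hm4 : 4 ≤ m)
    (n v : ℕ) (hn : n = 2 ^ m - 1) (hv : v = 2 ^ ((m - 2) / 2) - 1) :
    Nat.gcd v n = 1 ∧
    ∀ a : ℕ, 1 ≤ a → a ≤ 2 ^ ((m - 2) / 2) → w2 (a * v) = (m - 2) / 2 := by
  set k := (m - 2) / 2 with hk
  have hmk : m = 2 * k + 2 := by omega
  have hkodd : k % 2 = 1 := by omega
  constructor
  · rw [hv, hn, mersenne_gcd k m]
    have : Nat.gcd k m = 1 := by
      have e : m = 2 + k * 2 := by omega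
      rw [e, Nat.gcd_add_mul_left_right, Nat.gcd_comm, Nat.gcd_rec, hkodd]
      simp
    rw [this]
    norm_num
  · intro a ha1 ha2
    have hpow : (1:ℕ) ≤ 2 ^ k := Nat.one_le_two_pow
    have key : a * v = (a - 1) * 2 ^ k + (2 ^ k - a) := by
      rw [hv]
      zify [hpow, ha1, ha2]
      ring
    rw [key, w2_split k (a - 1) (2 ^ k - a) (by omega)]
    have h2 : 2 ^ k - a = 2 ^ k - 1 - (a - 1) := by omega
    rw [h2]
    exact w2_compl k (a - 1) (by omega)
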